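/- Let p be a prime, s a positive integer, q = p^s, R = Z_q[u]/(u^2), and n a positive integer. Let f_0, f_1, g_1 ∈ Z_q[X] with g_1 monic, and let C be the ideal of R[X]/(X^n − 1) generated by the images of f_0 + u·f_1 and u·g_1. Then there exists f_1' ∈ Z_q[X] with f_1' = 0 or deg f_1' < deg g_1 such that C is also the ideal generated by the images of f_0 + u·f_1' and u·g_1. -/

import Mathlib

open Polynomial

/-- In a cyclic code `C = (f_0 + u·f_1, u·g_1)` with `g_1` monic, the generator
`f_1` may be reduced modulo `g_1`: there is `f_1'` with `f_1' = 0` or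
`deg f_1' < deg g_1` generating the same code. -/
theorem cyclic_code_reduce_f1 (p s n : ℕ) [Fact p.Prime] (hs : 0 < s) (hn : 0 < n)
    (f₀ f₁ g₁ : Polynomial (ZMod (p ^ s))) (hg : g₁.Monic)
    (C : Ideal (AdjoinRoot (X ^ n - 1 : Polynomial (DualNumber (ZMod (p ^ s))))))
    (hC : C = Ideal.span
      {AdjoinRoot.mk (X ^ n - 1 : Polynomial (DualNumber (ZMod (p ^ s))))
        (f₀.map (algebraMap (ZMod (p ^ s)) (DualNumber (ZMod (p ^ s)))) +
          Polynomial.C (DualNumber.eps : DualNumber (ZMod (p ^ s))) *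
            f₁.map (algebraMap (ZMod (p ^ s)) (DualNumber (ZMod (p ^ s))))),
       AdjoinRoot.mk (X ^ n - 1 : Polynomial (DualNumber (ZMod (p ^ s))))
        (Polynomial.C (DualNumber.eps : DualNumber (ZMod (p ^ s))) *
          g₁.map (algebraMap (ZMod (p ^ s)) (DualNumber (ZMod (p ^ s)))))}) :
    ∃ f₁' : Polynomial (ZMod (p ^ s)),
      (f₁' = 0 ∨ f₁'.degree < g₁.degree) ∧
      C = Ideal.span
        {AdjoinRoot.mk (X ^ n - 1 : Polynomial (DualNumber (ZMod (p ^ s))))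
          (f₀.map (algebraMap (ZMod (p ^ s)) (DualNumber (ZMod (p ^ s)))) +
            Polynomial.C (DualNumber.eps : DualNumber (ZMod (p ^ s))) *
              f₁'.map (algebraMap (ZMod (p ^ s)) (DualNumber (ZMod (p ^ s))))),
         AdjoinRoot.mk (X ^ n - 1 : Polynomial (DualNumber (ZMod (p ^ s))))
          (Polynomial.C (DualNumber.eps : DualNumber (ZMod (p ^ s))) *
            g₁.map (algebraMap (ZMod (p ^ s)) (DualNumber (ZMod (p ^ s)))))} := by
  have hq : 1 < p ^ s := Nat.one_lt_pow hs.ne' (Fact.out (p := p.Prime)).one_lt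
  haveI : Fact (1 < p ^ s) := ⟨hq⟩
  refine ⟨f₁ %ₘ g₁, Or.inr (degree_modByMonic_lt f₁ hg), ?_⟩
  set φ := algebraMap (ZMod (p ^ s)) (DualNumber (ZMod (p ^ s)))
  have key : (f₀.map φ + Polynomial.C DualNumber.eps * f₁.map φ) =
      (f₀.map φ + Polynomial.C DualNumber.eps * (f₁ %ₘ g₁).map φ) +
        (Polynomial.C DualNumber.eps * g₁.map φ) * (f₁ /ₘ g₁).map φ := by
    conv_lhs => rw [← modByMonic_add_div f₁ g₁]
    rw [Polynomial.map_add, Polynomial.map_mul]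
    ring
  rw [hC, key, map_add, map_mul, Ideal.span_pair_add_right_mul]
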